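/- Suppose the inf-sup constant β := inf_{q≠0} sup_{v≠0} b(v,q)/(‖q‖_Q‖v‖_V) ≥ β₀ > 0 and K is nonempty. Then the generalized Karush–Kuhn–Tucker system — find (u, λ) ∈ V × Q with: a(u,v) + b(v,λ) = f(v) for all v ∈ V; g(q) − b(u,q) ≥ 0 for all q ∈ M; λ ∈ M; and g(λ) − b(u,λ) = 0 — has a unique solution. Moreover, a pair (u, λ) ∈ V × M solves the mixed problem (a(u,v) + b(v,λ) = f(v) for all v ∈ V and b(u, q − λ) ≤ g(q − λ) for all q ∈ M) if and only if it solves the KKT system. -/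

import Mathlib

open scoped InnerProductSpace

/-- Lions–Stampacchia: existence of a solution to the variational inequality on a
nonempty closed convex set, for a coercive bounded bilinear form. -/
theorem aux_LS {V : Type*} [NormedAddCommGroup V] [InnerProductSpace ℝ V] [CompleteSpace V]
    (a : V →L[ℝ] V →L[ℝ] ℝ) (α : ℝ) (hα : 0 < α)
    (hcoer : ∀ v : V, α * ‖v‖ ^ 2 ≤ a v v)
    (f : V →L[ℝ] ℝ) (K : Set V) (hKne : K.Nonempty) (hKcl : IsClosed K) (hKcv : Convex ℝ K) :
    ∃ u ∈ K, ∀ w ∈ K, f (w - u) ≤ a u (w - u) := by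
  classical
  -- projection onto K
  have hproj : ∀ x : V, ∃ p, p ∈ K ∧ ∀ w ∈ K, ⟪x - p, w - p⟫_ℝ ≤ 0 := by
    intro x
    obtain ⟨p, hp, hpe⟩ := exists_norm_eq_iInf_of_complete_convex hKne hKcl.isComplete hKcv x
    exact ⟨p, hp, (norm_eq_iInf_iff_real_inner_le_zero hKcv hp).1 hpe⟩
  choose P hPmem hPchar using hproj
  have hPlip : ∀ x y, ‖P x - P y‖ ≤ ‖x - y‖ := by
    intro x y
    have h1 := hPchar x (P y) (hPmem y)
    have h2 := hPchar y (P x) (hPmem x)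
    have key : ‖P x - P y‖ ^ 2 ≤ ⟪x - y, P x - P y⟫_ℝ := by
      have e : ⟪P x - P y, P x - P y⟫_ℝ - ⟪x - y, P x - P y⟫_ℝ
          = ⟪x - P x, P y - P x⟫_ℝ + ⟪y - P y, P x - P y⟫_ℝ := by
        simp only [inner_sub_left, inner_sub_right]; ring
      have e2 : ⟪P x - P y, P x - P y⟫_ℝ = ‖P x - P y‖ ^ 2 := real_inner_self_eq_norm_sq _
      linarith
    have h3 : ⟪x - y, P x - P y⟫_ℝ ≤ ‖x - y‖ * ‖P x - P y‖ := real_inner_le_norm _ _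
    by_contra hcon
    push_neg at hcon
    nlinarith [norm_nonneg (P x - P y), norm_nonneg (x - y)]
  -- Riesz representations (kept opaque to avoid heavy unfolding)
  obtain ⟨A, hA, hAsub, hAnorm0⟩ :
      ∃ A : V → V, (∀ u v : V, ⟪A u, v⟫_ℝ = a u v) ∧
        (∀ x y : V, A x - A y = A (x - y)) ∧ (∀ z : V, ‖A z‖ ≤ ‖a‖ * ‖z‖) := by
    refine ⟨fun v => (InnerProductSpace.toDual ℝ V).symm (a v),
      fun u v => InnerProductSpace.toDual_symm_apply, fun x y => ?_, fun z => ?_⟩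
    · rw [← map_sub, ← map_sub]
    · rw [LinearIsometryEquiv.norm_map]
      exact a.le_opNorm z
  obtain ⟨F, hF⟩ : ∃ F : V, ∀ v : V, ⟪F, v⟫_ℝ = f v :=
    ⟨(InnerProductSpace.toDual ℝ V).symm f, fun v => InnerProductSpace.toDual_symm_apply⟩
  obtain ⟨γ, hγα, hγ0, hγa⟩ : ∃ γ : ℝ, α < γ ∧ 0 < γ ∧ ‖a‖ < γ := by
    refine ⟨max ‖a‖ α + 1, ?_, ?_, ?_⟩
    · have := le_max_right ‖a‖ α; linarith
    · have := le_max_right ‖a‖ α; linarith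
    · have := le_max_left ‖a‖ α; linarith
  obtain ⟨ρ, hρ0, hρdef⟩ : ∃ ρ : ℝ, 0 < ρ ∧ ρ = α / γ ^ 2 := ⟨α / γ ^ 2, by positivity, rfl⟩
  have hAnorm : ∀ z : V, ‖A z‖ ≤ γ * ‖z‖ := by
    intro z
    have h2 := hAnorm0 z
    nlinarith [norm_nonneg z]
  obtain ⟨c, hc0, hcsq⟩ : ∃ c : ℝ, 0 ≤ c ∧ c ^ 2 = 1 - α ^ 2 / γ ^ 2 := by
    have ht1 : α ^ 2 / γ ^ 2 < 1 := by
      rw [div_lt_one (by positivity)]; nlinarith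
    exact ⟨Real.sqrt (1 - α ^ 2 / γ ^ 2), Real.sqrt_nonneg _, Real.sq_sqrt (by linarith)⟩
  have ht01 : 0 < α ^ 2 / γ ^ 2 := by positivity
  have ht1 : α ^ 2 / γ ^ 2 < 1 := by
    rw [div_lt_one (by positivity)]; nlinarith
  have hc1 : c < 1 := by nlinarith
  -- contraction estimate
  have hcontr : ∀ x y : V,
      ‖(x - ρ • (A x - F)) - (y - ρ • (A y - F))‖ ≤ c * ‖x - y‖ := by
    intro x y
    have hrw : (x - ρ • (A x - F)) - (y - ρ • (A y - F)) = (x - y) - ρ • A (x - y) := by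
      rw [← hAsub x y, smul_sub, smul_sub, smul_sub]; abel
    set z := x - y with hz
    rw [hrw]
    have e1 : ‖z - ρ • A z‖ ^ 2 = ‖z‖ ^ 2 - 2 * (ρ * a z z) + ρ ^ 2 * ‖A z‖ ^ 2 := by
      have h1 : ⟪z, ρ • A z⟫_ℝ = ρ * a z z := by
        rw [real_inner_smul_right, real_inner_comm, hA]
      have h2 : ‖ρ • A z‖ = ρ * ‖A z‖ := by
        rw [norm_smul, Real.norm_eq_abs, abs_of_pos hρ0]
      rw [norm_sub_sq_real, h1, h2]; ring
    have h3 := hcoer z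
    have h4 : ‖A z‖ ^ 2 ≤ γ ^ 2 * ‖z‖ ^ 2 := by
      nlinarith [hAnorm z, norm_nonneg (A z), norm_nonneg z]
    have key1 : ρ * (α * ‖z‖ ^ 2) ≤ ρ * (a z z) := mul_le_mul_of_nonneg_left h3 hρ0.le
    have key2 : ρ ^ 2 * ‖A z‖ ^ 2 ≤ ρ ^ 2 * (γ ^ 2 * ‖z‖ ^ 2) :=
      mul_le_mul_of_nonneg_left h4 (sq_nonneg ρ)
    have e2 : ρ * (α * ‖z‖ ^ 2) = α ^ 2 / γ ^ 2 * ‖z‖ ^ 2 := by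
      rw [hρdef]; field_simp
    have e3 : ρ ^ 2 * (γ ^ 2 * ‖z‖ ^ 2) = α ^ 2 / γ ^ 2 * ‖z‖ ^ 2 := by
      rw [hρdef]; field_simp
    have hsq : ‖z - ρ • A z‖ ^ 2 ≤ (c * ‖z‖) ^ 2 := by
      have hc2 : (c * ‖z‖) ^ 2 = (1 - α ^ 2 / γ ^ 2) * ‖z‖ ^ 2 := by
        rw [mul_pow, hcsq]
      rw [hc2, e1]
      linarith
    have h7 := Real.sqrt_le_sqrt hsq
    rwa [Real.sqrt_sq (norm_nonneg _), Real.sqrt_sq (mul_nonneg hc0 (norm_nonneg _))] at h7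
  -- Banach fixed point on the subtype
  haveI : Nonempty ↥K := hKne.to_subtype
  haveI : CompleteSpace ↥K := hKcl.completeSpace_coe
  set T : ↥K → ↥K := fun x => ⟨P ((x : V) - ρ • (A x - F)), hPmem _⟩ with hTdef
  set k : NNReal := ⟨c, hc0⟩ with hkdef
  have hT : ContractingWith k T := by
    constructor
    · exact_mod_cast hc1
    · apply LipschitzWith.of_dist_le_mul
      intro x y
      rw [Subtype.dist_eq, Subtype.dist_eq, dist_eq_norm, dist_eq_norm]
      calc ‖P ((x : V) - ρ • (A x - F)) - P ((y : V) - ρ • (A y - F))‖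
          ≤ ‖((x : V) - ρ • (A x - F)) - ((y : V) - ρ • (A y - F))‖ := hPlip _ _
        _ ≤ c * ‖(x : V) - (y : V)‖ := hcontr _ _
        _ = (k : ℝ) * ‖(x : V) - (y : V)‖ := rfl
  set u₀ : ↥K := ContractingWith.fixedPoint T hT with hu₀
  have hfix : T u₀ = u₀ := hT.fixedPoint_isFixedPt
  set u : V := (u₀ : V) with hudef
  have hu : P (u - ρ • (A u - F)) = u := congrArg Subtype.val hfix
  refine ⟨u, u₀.2, ?_⟩
  intro w hw
  have h := hPchar (u - ρ • (A u - F)) w hw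
  rw [hu] at h
  have h2 : (u - ρ • (A u - F)) - u = -(ρ • (A u - F)) := by abel
  rw [h2, inner_neg_left] at h
  have h3 : 0 ≤ ⟪ρ • (A u - F), w - u⟫_ℝ := by linarith
  rw [real_inner_smul_left] at h3
  have h4 : 0 ≤ ⟪A u - F, w - u⟫_ℝ := nonneg_of_mul_nonneg_right h3 hρ0
  rw [inner_sub_left, hA, hF] at h4
  linarith

set_option maxHeartbeats 1000000 in
/-- Under the inf-sup condition, the generalized KKT system has a unique solution,
and a pair `(u, λ) ∈ V × M` solves the mixed problem iff it solves the KKT system. -/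
theorem stmt_4 {V Q : Type*}
    [NormedAddCommGroup V] [InnerProductSpace ℝ V] [CompleteSpace V]
    [NormedAddCommGroup Q] [InnerProductSpace ℝ Q] [CompleteSpace Q]
    (a : V →L[ℝ] V →L[ℝ] ℝ) (α : ℝ) (hα : 0 < α)
    (hcoer : ∀ v : V, α * ‖v‖ ^ 2 ≤ a v v)
    (b : V →L[ℝ] Q →L[ℝ] ℝ) (f : V →L[ℝ] ℝ) (g : Q →L[ℝ] ℝ)
    (M : Set Q) (hMne : M.Nonempty) (hMcl : IsClosed M) (hMcv : Convex ℝ M)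
    (hMcone : ∀ c : ℝ, 0 ≤ c → ∀ q ∈ M, c • q ∈ M)
    (β₀ : ℝ) (hβ₀ : 0 < β₀)
    (hinfsup : ∀ q : Q, β₀ * ‖q‖ ≤ ‖b.flip q‖)
    (hKne : {v : V | ∀ q ∈ M, b v q ≤ g q}.Nonempty) :
    (∃! p : V × Q, (∀ v : V, a p.1 v + b v p.2 = f v) ∧
        (∀ q ∈ M, 0 ≤ g q - b p.1 q) ∧ p.2 ∈ M ∧ g p.2 - b p.1 p.2 = 0) ∧
    (∀ u : V, ∀ lam : Q, lam ∈ M →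
      (((∀ v : V, a u v + b v lam = f v) ∧
          (∀ q ∈ M, b u (q - lam) ≤ g (q - lam))) ↔
        ((∀ v : V, a u v + b v lam = f v) ∧
          (∀ q ∈ M, 0 ≤ g q - b u q) ∧ g lam - b u lam = 0))) := by
  classical
  have h0M : (0 : Q) ∈ M := by
    obtain ⟨q, hq⟩ := hMne
    simpa using hMcone 0 le_rfl q hq
  set K : Set V := {v : V | ∀ q ∈ M, b v q ≤ g q} with hKdef
  have hKcl : IsClosed K := by
    have : K = ⋂ q ∈ M, {v : V | b.flip q v ≤ g q} := by
      ext v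
      simp only [hKdef, Set.mem_setOf_eq, Set.mem_iInter, ContinuousLinearMap.flip_apply]
    rw [this]
    exact isClosed_biInter fun q _ => isClosed_le (b.flip q).continuous continuous_const
  have hKcv : Convex ℝ K := by
    intro x hx y hy s t hs ht hst q hq
    have h1 := hx q hq
    have h2 := hy q hq
    have e : b (s • x + t • y) q = s * b x q + t * b y q := by
      rw [map_add, map_smul, map_smul]
      simp [ContinuousLinearMap.add_apply, ContinuousLinearMap.smul_apply, smul_eq_mul]
    rw [e]
    have h3 : s * b x q ≤ s * g q := mul_le_mul_of_nonneg_left h1 hs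
    have h4 : t * b y q ≤ t * g q := mul_le_mul_of_nonneg_left h2 ht
    have h5 : s * g q + t * g q = g q := by rw [← add_mul, hst, one_mul]
    linarith
  obtain ⟨u, huK, hVI⟩ := aux_LS a α hα hcoer f K hKne hKcl hKcv
  -- Riesz representation of q ↦ b(·,q)
  obtain ⟨Bt, hBt, hBtnorm, hBtcont⟩ :
      ∃ Bt : Q → V, (∀ q v, ⟪Bt q, v⟫_ℝ = b v q) ∧ (∀ q, β₀ * ‖q‖ ≤ ‖Bt q‖) ∧
        Continuous Bt := by
    refine ⟨fun q => (InnerProductSpace.toDual ℝ V).symm (b.flip q), fun q v => ?_,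
      fun q => ?_, ?_⟩
    · rw [InnerProductSpace.toDual_symm_apply, ContinuousLinearMap.flip_apply]
    · rw [LinearIsometryEquiv.norm_map]
      exact hinfsup q
    · exact (InnerProductSpace.toDual ℝ V).symm.continuous.comp b.flip.continuous
  have hBtlin : ∀ (s t : ℝ) (p q : Q), Bt (s • p + t • q) = s • Bt p + t • Bt q := by
    intro s t p q
    apply ext_inner_right ℝ
    intro v
    rw [hBt, inner_add_left, real_inner_smul_left, real_inner_smul_left, hBt, hBt]
    rw [map_add, map_smul, map_smul]
    simp [ContinuousLinearMap.add_apply, ContinuousLinearMap.smul_apply, smul_eq_mul]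
  have hBtsub : ∀ p q : Q, Bt p - Bt q = Bt (p - q) := by
    intro p q
    have h5 := hBtlin 1 (-1) p q
    simp only [one_smul, neg_one_smul] at h5
    rw [sub_eq_add_neg, sub_eq_add_neg, h5]
  have hBtsmul : ∀ (c : ℝ) (q : Q), Bt (c • q) = c • Bt q := by
    intro c q
    have h5 := hBtlin c 0 q q
    simpa using h5
  have hBt0 : Bt (0 : Q) = 0 := by
    have h5 := hBtsmul 0 0
    simpa using h5
  obtain ⟨L, hL⟩ : ∃ L : V, ∀ v : V, ⟪L, v⟫_ℝ = f v - a u v := by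
    refine ⟨(InnerProductSpace.toDual ℝ V).symm (f - a u), fun v => ?_⟩
    rw [InnerProductSpace.toDual_symm_apply]
    simp [ContinuousLinearMap.sub_apply]
  set C : Set (V × ℝ) :=
    {y | ∃ μ ∈ M, ∃ r : ℝ, 0 ≤ r ∧ y = (Bt μ, g μ - b u μ + r)} with hCdef
  have hCcv : Convex ℝ C := by
    rintro y₁ ⟨μ₁, hμ₁, r₁, hr₁, rfl⟩ y₂ ⟨μ₂, hμ₂, r₂, hr₂, rfl⟩ s t hs ht hst
    refine ⟨s • μ₁ + t • μ₂, hMcv hμ₁ hμ₂ hs ht hst, s * r₁ + t * r₂,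
      by positivity, ?_⟩
    rw [Prod.ext_iff]
    constructor
    · simp only [Prod.smul_mk, Prod.mk_add_mk, Prod.fst]
      rw [hBtlin]
    · simp only [Prod.smul_mk, Prod.mk_add_mk, Prod.snd, smul_eq_mul]
      rw [map_add, map_smul, map_smul, map_add, map_smul, map_smul]
      simp only [ContinuousLinearMap.add_apply, ContinuousLinearMap.smul_apply,
        smul_eq_mul]
      ring
  have hCcl : IsClosed C := by
    apply IsSeqClosed.isClosed
    intro y yl hy hconv
    choose μ hμ r hr hyeq using hy
    have h1 : Filter.Tendsto (fun n => (y n).1) Filter.atTop (nhds yl.1) :=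
      (continuous_fst.tendsto yl).comp hconv
    have h1' : Filter.Tendsto (fun n => Bt (μ n)) Filter.atTop (nhds yl.1) :=
      h1.congr fun n => congrArg Prod.fst (hyeq n)
    have hcau : CauchySeq (fun n => μ n) := by
      rw [Metric.cauchySeq_iff]
      intro ε hε
      have hc2 := h1'.cauchySeq
      rw [Metric.cauchySeq_iff] at hc2
      obtain ⟨N, hN⟩ := hc2 (β₀ * ε) (by positivity)
      refine ⟨N, fun m hm n hn => ?_⟩
      have h2 := hN m hm n hn
      rw [dist_eq_norm] at h2 ⊢
      have h3 : β₀ * ‖μ m - μ n‖ ≤ ‖Bt (μ m) - Bt (μ n)‖ := by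
        rw [hBtsub]; exact hBtnorm _
      nlinarith
    obtain ⟨μl, hμl⟩ := cauchySeq_tendsto_of_complete hcau
    have hμlM : μl ∈ M := hMcl.mem_of_tendsto hμl (Filter.Eventually.of_forall hμ)
    have hBtconv : Filter.Tendsto (fun n => Bt (μ n)) Filter.atTop (nhds (Bt μl)) :=
      (hBtcont.tendsto _).comp hμl
    have hfst : yl.1 = Bt μl := tendsto_nhds_unique h1' hBtconv
    have h2conv : Filter.Tendsto (fun n => (y n).2) Filter.atTop (nhds yl.2) :=
      (continuous_snd.tendsto yl).comp hconv
    have hgconv : Filter.Tendsto (fun n => g (μ n) - b u (μ n)) Filter.atTop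
        (nhds (g μl - b u μl)) :=
      ((g.continuous.tendsto _).comp hμl).sub (((b u).continuous.tendsto _).comp hμl)
    have hrconv : Filter.Tendsto (fun n => r n) Filter.atTop
        (nhds (yl.2 - (g μl - b u μl))) := by
      have he : (fun n => r n) = fun n => (y n).2 - (g (μ n) - b u (μ n)) := by
        funext n
        have := congrArg Prod.snd (hyeq n)
        simp only at this
        rw [this]; ring
      rw [he]
      exact h2conv.sub hgconv
    have hrpos : 0 ≤ yl.2 - (g μl - b u μl) :=
      le_of_tendsto_of_tendsto' tendsto_const_nhds hrconv fun n => hr n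
    refine ⟨μl, hμlM, yl.2 - (g μl - b u μl), hrpos, ?_⟩
    rw [Prod.ext_iff]
    exact ⟨hfst, by ring⟩
  -- the key membership via separation
  have hmem : ((L, (0 : ℝ)) : V × ℝ) ∈ C := by
    by_contra hnot
    obtain ⟨φ, u', hφC, hφL⟩ := geometric_hahn_banach_closed_point hCcv hCcl hnot
    have h0C : (((0 : V), (0 : ℝ)) : V × ℝ) ∈ C := ⟨0, h0M, 0, le_rfl, by simp [hBt0]⟩
    have hu'pos : 0 < u' := by
      have h00 : φ ((0 : V), (0 : ℝ)) = 0 := map_zero φ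
      have := hφC _ h0C; simpa [h00] using this
    have hφle : ∀ y ∈ C, φ y ≤ 0 := by
      rintro y ⟨μ, hμ, r, hr, rfl⟩
      by_contra hpos
      push_neg at hpos
      obtain ⟨t, htdef⟩ : ∃ t : ℝ, t = (u' + 1) / φ (Bt μ, g μ - b u μ + r) := ⟨_, rfl⟩
      have ht0 : 0 ≤ t := htdef ▸ div_nonneg (by linarith) hpos.le
      have hmemt : (t • ((Bt μ, g μ - b u μ + r) : V × ℝ)) ∈ C := by
        refine ⟨t • μ, hMcone t ht0 μ hμ, t * r, mul_nonneg ht0 hr, ?_⟩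
        rw [Prod.ext_iff]
        constructor
        · simp only [Prod.smul_mk, Prod.fst]
          rw [hBtsmul]
        · simp only [Prod.smul_mk, Prod.snd, smul_eq_mul]
          rw [map_smul, map_smul]
          simp only [ContinuousLinearMap.smul_apply, smul_eq_mul]
          ring
      have h5 := hφC _ hmemt
      rw [map_smul, smul_eq_mul] at h5
      have h6 : t * φ (Bt μ, g μ - b u μ + r) = u' + 1 := by
        rw [htdef]; field_simp
      linarith
    obtain ⟨s, hsdef⟩ : ∃ s : ℝ, s = φ ((0 : V), (1 : ℝ)) := ⟨_, rfl⟩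
    obtain ⟨z, hz⟩ : ∃ z : V, ∀ v : V, ⟪z, v⟫_ℝ = φ (v, 0) := by
      refine ⟨(InnerProductSpace.toDual ℝ V).symm
        (φ.comp (ContinuousLinearMap.inl ℝ V ℝ)), fun v => ?_⟩
      rw [InnerProductSpace.toDual_symm_apply]
      simp [ContinuousLinearMap.comp_apply]
    have hφeq : ∀ (v : V) (t : ℝ), φ (v, t) = ⟪z, v⟫_ℝ + t * s := by
      intro v t
      have he : ((v, t) : V × ℝ) = (v, 0) + t • ((0 : V), (1 : ℝ)) := by
        simp [Prod.ext_iff]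
      rw [he, map_add, map_smul, smul_eq_mul, hz, ← hsdef]
    have hcond : ∀ μ ∈ M, ∀ r : ℝ, 0 ≤ r → b z μ + (g μ - b u μ + r) * s ≤ 0 := by
      intro μ hμ r hr
      have h5 := hφle _ ⟨μ, hμ, r, hr, rfl⟩
      rw [hφeq] at h5
      have h6 : ⟪z, Bt μ⟫_ℝ = b z μ := by rw [real_inner_comm, hBt]
      rw [h6] at h5
      linarith
    have hzL : 0 < f z - a u z := by
      have h5 := hφL
      rw [hφeq] at h5
      have h6 : ⟪z, L⟫_ℝ = f z - a u z := by rw [real_inner_comm, hL]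
      rw [h6] at h5
      linarith
    have hs0 : s ≤ 0 := by
      have h5 := hcond 0 h0M 1 zero_le_one
      simpa using h5
    rcases eq_or_lt_of_le hs0 with hseq | hslt
    · -- s = 0
      have hbz : ∀ μ ∈ M, b z μ ≤ 0 := by
        intro μ hμ
        have h5 := hcond μ hμ 0 le_rfl
        rw [hseq] at h5
        simpa using h5
      have hwK : u + z ∈ K := by
        intro q hq
        have h1 := huK q hq
        have h2 := hbz q hq
        have e : b (u + z) q = b u q + b z q := by
          rw [map_add]; simp [ContinuousLinearMap.add_apply]
        rw [e]; linarith
      have h5 := hVI (u + z) hwK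
      rw [add_sub_cancel_left] at h5
      linarith
    · -- s < 0
      have hwK : u + (-s)⁻¹ • z ∈ K := by
        intro q hq
        have h1 := hcond q hq 0 le_rfl
        have hns : (0 : ℝ) < -s := by linarith
        have h2 : b z q ≤ (-s) * (g q - b u q) := by nlinarith
        have h3 : (-s)⁻¹ * b z q ≤ g q - b u q := by
          have h4 := mul_le_mul_of_nonneg_left h2 (inv_nonneg.mpr hns.le)
          rwa [← mul_assoc, inv_mul_cancel₀ hns.ne', one_mul] at h4
        have e : b (u + (-s)⁻¹ • z) q = b u q + (-s)⁻¹ * b z q := by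
          rw [map_add, map_smul]; simp [ContinuousLinearMap.add_apply,
            ContinuousLinearMap.smul_apply, smul_eq_mul]
        rw [e]; linarith
      have h5 := hVI _ hwK
      rw [add_sub_cancel_left] at h5
      rw [ContinuousLinearMap.map_smul, ContinuousLinearMap.map_smul] at h5
      simp only [smul_eq_mul] at h5
      have hns : (0 : ℝ) < (-s)⁻¹ := by
        have : (0 : ℝ) < -s := by linarith
        positivity
      nlinarith
  obtain ⟨lam, hlamM, r, hrpos, heqp⟩ := hmem
  have hfst : L = Bt lam := congrArg Prod.fst heqp
  have hsnd : (0 : ℝ) = g lam - b u lam + r := congrArg Prod.snd heqp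
  have heq1 : ∀ v : V, a u v + b v lam = f v := by
    intro v
    have h1 : ⟪L, v⟫_ℝ = ⟪Bt lam, v⟫_ℝ := by rw [hfst]
    rw [hL, hBt] at h1
    linarith
  have hcompl : g lam - b u lam = 0 := by
    have h2 : 0 ≤ g lam - b u lam := by
      have := huK lam hlamM; linarith
    linarith
  constructor
  · -- existence and uniqueness
    refine ⟨(u, lam), ⟨heq1, fun q hq => by have := huK q hq; linarith, hlamM, hcompl⟩, ?_⟩
    rintro ⟨u₂, lam₂⟩ ⟨h1, h2, h3, h4⟩
    simp only at h1 h2 h3 h4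
    have hdiff : ∀ v : V, a (u₂ - u) v = b v lam - b v lam₂ := by
      intro v
      have e1 := h1 v
      have e2 := heq1 v
      have e : a (u₂ - u) v = a u₂ v - a u v := by
        rw [map_sub]; simp [ContinuousLinearMap.sub_apply]
      rw [e]; linarith
    have hw : u₂ = u := by
      have hco := hcoer (u₂ - u)
      have h5 := hdiff (u₂ - u)
      have e1 : b (u₂ - u) lam = b u₂ lam - b u lam := by
        rw [map_sub]; simp [ContinuousLinearMap.sub_apply]
      have e2 : b (u₂ - u) lam₂ = b u₂ lam₂ - b u lam₂ := by
        rw [map_sub]; simp [ContinuousLinearMap.sub_apply]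
      have f1 : 0 ≤ g lam - b u₂ lam := h2 lam hlamM
      have f2 : b u lam₂ ≤ g lam₂ := huK lam₂ h3
      have hle : a (u₂ - u) (u₂ - u) ≤ 0 := by
        rw [h5, e1, e2]; linarith
      have hn : ‖u₂ - u‖ ^ 2 ≤ 0 := by nlinarith
      have hn2 : ‖u₂ - u‖ = 0 := by nlinarith [norm_nonneg (u₂ - u), sq_nonneg ‖u₂ - u‖]
      rw [norm_eq_zero, sub_eq_zero] at hn2
      exact hn2
    have hlam : lam₂ = lam := by
      have h5 : ∀ v : V, b v (lam - lam₂) = 0 := by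
        intro v
        have h6 := hdiff v
        rw [hw] at h6
        have h7 : (a (u - u)) v = 0 := by simp
        have e : b v (lam - lam₂) = b v lam - b v lam₂ := map_sub _ _ _
        rw [e]
        linarith
      have h7 : b.flip (lam - lam₂) = 0 := by
        ext v
        simp only [ContinuousLinearMap.flip_apply, ContinuousLinearMap.zero_apply]
        exact h5 v
      have h8 := hinfsup (lam - lam₂)
      rw [h7] at h8
      simp only [norm_zero] at h8
      have h9 : ‖lam - lam₂‖ = 0 := by nlinarith [norm_nonneg (lam - lam₂)]
      rw [norm_eq_zero, sub_eq_zero] at h9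
      exact h9.symm
    rw [Prod.ext_iff]
    exact ⟨hw, hlam⟩
  · -- equivalence of the two formulations
    intro u0 lam0 hlam0
    constructor
    · rintro ⟨he, hineq⟩
      have h2lam : (2 : ℝ) • lam0 ∈ M := hMcone 2 (by norm_num) _ hlam0
      have ha' := hineq _ h2lam
      have hb' := hineq 0 h0M
      have e2 : ((2 : ℝ) • lam0) - lam0 = lam0 := by
        rw [two_smul]; abel
      rw [e2] at ha'
      rw [zero_sub, map_neg, map_neg] at hb'
      have hcompl0 : g lam0 - b u0 lam0 = 0 := by linarith
      refine ⟨he, fun q hq => ?_, hcompl0⟩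
      have h5 := hineq q hq
      rw [map_sub, map_sub] at h5
      linarith
    · rintro ⟨he, hsign, hcompl0⟩
      refine ⟨he, fun q hq => ?_⟩
      rw [map_sub, map_sub]
      have := hsign q hq
      linarith
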